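/- The All Compliers LATE is a Wald ratio: under independence, vector monotonicity, and P(Z = (1,…,1)) > 0 and P(Z = (0,…,0)) > 0, E[Y(1) − Y(0) | G ∉ {always-taker, never-taker}] = (E[Y | Z = 1̄] − E[Y | Z = 0̄]) / (E[D | Z = 1̄] − E[D | Z = 0̄]), provided the denominator is nonzero, where 1̄ = (1,…,1) and 0̄ = (0,…,0). -/

import Mathlib

open MeasureTheory ProbabilityTheory

lemma indep_setIntegral {Ω : Type*} [MeasurableSpace Ω] (μ : Measure Ω) [IsProbabilityMeasure μ]
    {α β : Type*} [MeasurableSpace α] [MeasurableSpace β]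
    {W : Ω → α} {Z : Ω → β} (hindep : IndepFun W Z μ)
    (hWm : Measurable W) (hZm : Measurable Z)
    (f : α → ℝ) (hf : Measurable f) {s : Set β} (hs : MeasurableSet s) :
    ∫ ω in Z ⁻¹' s, f (W ω) ∂μ = (μ (Z ⁻¹' s)).toReal * ∫ ω, f (W ω) ∂μ := by
  have hind : IndepFun (fun ω => f (W ω)) (fun ω => Set.indicator s (fun _ => (1:ℝ)) (Z ω)) μ :=
    hindep.comp hf (measurable_const.indicator hs)
  have hmul : ∫ ω, f (W ω) * Set.indicator s (fun _ => (1:ℝ)) (Z ω) ∂μ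
      = (∫ ω, f (W ω) ∂μ) * ∫ ω, Set.indicator s (fun _ => (1:ℝ)) (Z ω) ∂μ :=
    hind.integral_fun_mul_eq_mul_integral (hf.comp hWm).aestronglyMeasurable
      ((measurable_const.indicator hs).comp hZm).aestronglyMeasurable
  have hprod : ∀ ω, f (W ω) * Set.indicator s (fun _ => (1:ℝ)) (Z ω)
      = Set.indicator (Z ⁻¹' s) (fun ω => f (W ω)) ω := by
    intro ω
    by_cases h : Z ω ∈ s
    · simp [Set.indicator_of_mem, h]
    · simp [Set.indicator_of_notMem, h]
  have hind2 : ∀ ω, Set.indicator s (fun _ => (1:ℝ)) (Z ω)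
      = Set.indicator (Z ⁻¹' s) (fun _ => (1:ℝ)) ω := by
    intro ω
    by_cases h : Z ω ∈ s
    · simp [h]
    · simp [h]
  calc ∫ ω in Z ⁻¹' s, f (W ω) ∂μ
      = ∫ ω, Set.indicator (Z ⁻¹' s) (fun ω => f (W ω)) ω ∂μ :=
        (integral_indicator (hZm hs)).symm
    _ = ∫ ω, f (W ω) * Set.indicator s (fun _ => (1:ℝ)) (Z ω) ∂μ := by
        simp_rw [hprod]
    _ = (∫ ω, f (W ω) ∂μ) * ∫ ω, Set.indicator s (fun _ => (1:ℝ)) (Z ω) ∂μ := hmul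
    _ = (∫ ω, f (W ω) ∂μ) * (μ (Z ⁻¹' s)).toReal := by
        simp_rw [hind2]
        rw [integral_indicator (hZm hs)]
        simp [measureReal_def]
    _ = (μ (Z ⁻¹' s)).toReal * ∫ ω, f (W ω) ∂μ := mul_comm _ _

lemma ind_diff {J : ℕ} (f : (Fin J → Bool) → Bool) (hf : Monotone f) :
    ((if f (fun _ => true) = true then (1:ℝ) else 0) - (if f (fun _ => false) = true then 1 else 0))
    = (if (f ≠ (fun _ => true) ∧ f ≠ (fun _ => false)) then 1 else 0) := by
  have hle : ∀ z : Fin J → Bool, (fun _ => false) ≤ z ∧ z ≤ (fun _ => true) := by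
    intro z; constructor <;> intro j <;> simp [Bool.false_le, Bool.le_true]
  by_cases h1 : f (fun _ => true) = true
  · by_cases h0 : f (fun _ => false) = true
    · have : f = fun _ => true := by
        funext z
        have := hf (hle z).1
        rw [h0] at this
        exact le_antisymm (Bool.le_true _) this
      simp [h1, h0, this]
    · have hne1 : f ≠ (fun _ => true) := by
        intro h; rw [h] at h0; exact h0 rfl
      have hne0 : f ≠ (fun _ => false) := by
        intro h; rw [h] at h1; exact absurd h1 (by simp)
      simp [h1, h0, hne1, hne0]
  · have hf0 : f = fun _ => false := by
      funext z
      have := hf (hle z).2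
      revert this h1
      cases f z <;> cases f (fun _ => true) <;> simp
    have h0 : f (fun _ => false) ≠ true := by rw [hf0]; simp
    simp [h1, h0, hf0]

/-- The All Compliers LATE equals a single Wald ratio: under independence, vector
monotonicity (each `D_g` monotone, always-takers `D_g ≡ 1`, never-takers `D_g ≡ 0`),
and positive probability on `Z = (1,…,1)` and `Z = (0,…,0)`,
`E[Y(1)−Y(0) | G ∉ {a.t., n.t.}] = (E[Y|Z=1̄] − E[Y|Z=0̄]) / (E[D|Z=1̄] − E[D|Z=0̄])`
provided the denominator is nonzero. -/
theorem stmt15 {Ω : Type*} [MeasurableSpace Ω] (μ : Measure Ω) [IsProbabilityMeasure μ]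
    {J : ℕ} (Z : Ω → Fin J → Bool) (hZm : Measurable Z)
    {γ : Type*} [Fintype γ] [MeasurableSpace γ] [MeasurableSingletonClass γ]
    (G : Ω → γ) (hGm : Measurable G)
    (Dg : γ → (Fin J → Bool) → Bool) (hVM : ∀ g, Monotone (Dg g))
    (Y1 Y0 : Ω → ℝ) (hY1m : Measurable Y1) (hY0m : Measurable Y0)
    (hY1i : Integrable Y1 μ) (hY0i : Integrable Y0 μ)
    (hindep : IndepFun (fun ω => (Y1 ω, Y0 ω, G ω)) Z μ)
    (h1 : 0 < μ {ω | Z ω = fun _ => true})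
    (h0 : 0 < μ {ω | Z ω = fun _ => false})
    (hcomp : 0 < μ {ω | Dg (G ω) ≠ (fun _ => true) ∧ Dg (G ω) ≠ (fun _ => false)})
    (hden :
      ((μ {ω | Z ω = fun _ => true}).toReal⁻¹ *
          ∫ ω in {ω | Z ω = fun _ => true},
            (if Dg (G ω) (Z ω) = true then (1 : ℝ) else 0) ∂μ) -
        ((μ {ω | Z ω = fun _ => false}).toReal⁻¹ *
          ∫ ω in {ω | Z ω = fun _ => false},
            (if Dg (G ω) (Z ω) = true then (1 : ℝ) else 0) ∂μ) ≠ 0) :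
    (μ {ω | Dg (G ω) ≠ (fun _ => true) ∧ Dg (G ω) ≠ (fun _ => false)}).toReal⁻¹ *
        ∫ ω in {ω | Dg (G ω) ≠ (fun _ => true) ∧ Dg (G ω) ≠ (fun _ => false)},
          (Y1 ω - Y0 ω) ∂μ =
      (((μ {ω | Z ω = fun _ => true}).toReal⁻¹ *
          ∫ ω in {ω | Z ω = fun _ => true},
            ((if Dg (G ω) (Z ω) = true then (1 : ℝ) else 0) * Y1 ω +
              (1 - if Dg (G ω) (Z ω) = true then (1 : ℝ) else 0) * Y0 ω) ∂μ) -
        ((μ {ω | Z ω = fun _ => false}).toReal⁻¹ *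
          ∫ ω in {ω | Z ω = fun _ => false},
            ((if Dg (G ω) (Z ω) = true then (1 : ℝ) else 0) * Y1 ω +
              (1 - if Dg (G ω) (Z ω) = true then (1 : ℝ) else 0) * Y0 ω) ∂μ)) /
      (((μ {ω | Z ω = fun _ => true}).toReal⁻¹ *
          ∫ ω in {ω | Z ω = fun _ => true},
            (if Dg (G ω) (Z ω) = true then (1 : ℝ) else 0) ∂μ) -
        ((μ {ω | Z ω = fun _ => false}).toReal⁻¹ *
          ∫ ω in {ω | Z ω = fun _ => false},
            (if Dg (G ω) (Z ω) = true then (1 : ℝ) else 0) ∂μ)) := by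
  classical
  have hz1m : MeasurableSet ({(fun _ => true)} : Set (Fin J → Bool)) := measurableSet_singleton _
  have hz0m : MeasurableSet ({(fun _ => false)} : Set (Fin J → Bool)) := measurableSet_singleton _
  have hS1 : {ω | Z ω = fun _ => true} = Z ⁻¹' {(fun _ => true)} := rfl
  have hS0 : {ω | Z ω = fun _ => false} = Z ⁻¹' {(fun _ => false)} := rfl
  have hS1m : MeasurableSet {ω | Z ω = fun _ => true} := hZm hz1m
  have hS0m : MeasurableSet {ω | Z ω = fun _ => false} := hZm hz0m
  set C : Set Ω := {ω | Dg (G ω) ≠ (fun _ => true) ∧ Dg (G ω) ≠ (fun _ => false)} with hC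
  have hCm : MeasurableSet C := hGm (Set.toFinite {g | Dg g ≠ (fun _ => true) ∧ Dg g ≠ (fun _ => false)}).measurableSet
  set W : Ω → ℝ × ℝ × γ := fun ω => (Y1 ω, Y0 ω, G ω) with hW
  have hWm : Measurable W := hY1m.prodMk (hY0m.prodMk hGm)
  set d1 : γ → ℝ := fun g => if Dg g (fun _ => true) = true then 1 else 0 with hd1
  set d0 : γ → ℝ := fun g => if Dg g (fun _ => false) = true then 1 else 0 with hd0
  have hd1m : Measurable d1 := measurable_of_countable _
  have hd0m : Measurable d0 := measurable_of_countable _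
  set f1 : ℝ × ℝ × γ → ℝ := fun p => d1 p.2.2 * p.1 + (1 - d1 p.2.2) * p.2.1 with hf1
  set f0 : ℝ × ℝ × γ → ℝ := fun p => d0 p.2.2 * p.1 + (1 - d0 p.2.2) * p.2.1 with hf0
  set g1 : ℝ × ℝ × γ → ℝ := fun p => d1 p.2.2 with hg1
  set g0 : ℝ × ℝ × γ → ℝ := fun p => d0 p.2.2 with hg0
  have hmsnd : Measurable fun p : ℝ × ℝ × γ => p.2.2 := measurable_snd.comp measurable_snd
  have hf1m : Measurable f1 :=
    ((hd1m.comp hmsnd).mul measurable_fst).add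
      ((measurable_const.sub (hd1m.comp hmsnd)).mul (measurable_fst.comp measurable_snd))
  have hf0m : Measurable f0 :=
    ((hd0m.comp hmsnd).mul measurable_fst).add
      ((measurable_const.sub (hd0m.comp hmsnd)).mul (measurable_fst.comp measurable_snd))
  have hg1m : Measurable g1 := hd1m.comp hmsnd
  have hg0m : Measurable g0 := hd0m.comp hmsnd
  -- bounds
  have hbd1 : ∀ g, ‖d1 g‖ ≤ 1 := by intro g; rw [hd1]; dsimp only; split <;> simp
  have hbd0 : ∀ g, ‖d0 g‖ ≤ 1 := by intro g; rw [hd0]; dsimp only; split <;> simp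
  have hbd1' : ∀ g, ‖1 - d1 g‖ ≤ 2 := by
    intro g
    calc ‖1 - d1 g‖ ≤ ‖(1:ℝ)‖ + ‖d1 g‖ := norm_sub_le _ _
      _ ≤ 1 + 1 := by simpa using hbd1 g
      _ = 2 := by norm_num
  have hbd0' : ∀ g, ‖1 - d0 g‖ ≤ 2 := by
    intro g
    calc ‖1 - d0 g‖ ≤ ‖(1:ℝ)‖ + ‖d0 g‖ := norm_sub_le _ _
      _ ≤ 1 + 1 := by simpa using hbd0 g
      _ = 2 := by norm_num
  -- integrability
  have hif1 : Integrable (fun ω => f1 (W ω)) μ := by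
    refine Integrable.add ?_ ?_
    · exact hY1i.bdd_mul ((hd1m.comp hGm)).aestronglyMeasurable (ae_of_all _ fun ω => hbd1 (G ω))
    · exact hY0i.bdd_mul ((measurable_const.sub (hd1m.comp hGm))).aestronglyMeasurable
        (ae_of_all _ fun ω => hbd1' (G ω))
  have hif0 : Integrable (fun ω => f0 (W ω)) μ := by
    refine Integrable.add ?_ ?_
    · exact hY1i.bdd_mul ((hd0m.comp hGm)).aestronglyMeasurable (ae_of_all _ fun ω => hbd0 (G ω))
    · exact hY0i.bdd_mul ((measurable_const.sub (hd0m.comp hGm))).aestronglyMeasurable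
        (ae_of_all _ fun ω => hbd0' (G ω))
  have hig1 : Integrable (fun ω => g1 (W ω)) μ := by
    refine (integrable_const (1:ℝ)).mono' ((hd1m.comp hGm)).aestronglyMeasurable ?_
    filter_upwards with ω using hbd1 (G ω)
  have hig0 : Integrable (fun ω => g0 (W ω)) μ := by
    refine (integrable_const (1:ℝ)).mono' ((hd0m.comp hGm)).aestronglyMeasurable ?_
    filter_upwards with ω using hbd0 (G ω)
  -- rewrite the four set integrals
  have e1 : ∫ ω in {ω | Z ω = fun _ => true},
        ((if Dg (G ω) (Z ω) = true then (1 : ℝ) else 0) * Y1 ω +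
          (1 - if Dg (G ω) (Z ω) = true then (1 : ℝ) else 0) * Y0 ω) ∂μ
      = (μ {ω | Z ω = fun _ => true}).toReal * ∫ ω, f1 (W ω) ∂μ := by
    rw [setIntegral_congr_fun hS1m (g := fun ω => f1 (W ω))
      (fun ω hω => by simp only [Set.mem_setOf_eq] at hω; simp [hω, hf1, hW, hd1]),
      hS1]
    exact indep_setIntegral μ hindep hWm hZm f1 hf1m hz1m
  have e0 : ∫ ω in {ω | Z ω = fun _ => false},
        ((if Dg (G ω) (Z ω) = true then (1 : ℝ) else 0) * Y1 ω +
          (1 - if Dg (G ω) (Z ω) = true then (1 : ℝ) else 0) * Y0 ω) ∂μ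
      = (μ {ω | Z ω = fun _ => false}).toReal * ∫ ω, f0 (W ω) ∂μ := by
    rw [setIntegral_congr_fun hS0m (g := fun ω => f0 (W ω))
      (fun ω hω => by simp only [Set.mem_setOf_eq] at hω; simp [hω, hf0, hW, hd0]),
      hS0]
    exact indep_setIntegral μ hindep hWm hZm f0 hf0m hz0m
  have e1d : ∫ ω in {ω | Z ω = fun _ => true},
        (if Dg (G ω) (Z ω) = true then (1 : ℝ) else 0) ∂μ
      = (μ {ω | Z ω = fun _ => true}).toReal * ∫ ω, g1 (W ω) ∂μ := by
    rw [setIntegral_congr_fun hS1m (g := fun ω => g1 (W ω))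
      (fun ω hω => by simp only [Set.mem_setOf_eq] at hω; simp [hω, hg1, hW, hd1]),
      hS1]
    exact indep_setIntegral μ hindep hWm hZm g1 hg1m hz1m
  have e0d : ∫ ω in {ω | Z ω = fun _ => false},
        (if Dg (G ω) (Z ω) = true then (1 : ℝ) else 0) ∂μ
      = (μ {ω | Z ω = fun _ => false}).toReal * ∫ ω, g0 (W ω) ∂μ := by
    rw [setIntegral_congr_fun hS0m (g := fun ω => g0 (W ω))
      (fun ω hω => by simp only [Set.mem_setOf_eq] at hω; simp [hω, hg0, hW, hd0]),
      hS0]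
    exact indep_setIntegral μ hindep hWm hZm g0 hg0m hz0m
  have hμ1 : (μ {ω | Z ω = fun _ => true}).toReal ≠ 0 :=
    ENNReal.toReal_ne_zero.2 ⟨h1.ne', measure_ne_top μ _⟩
  have hμ0 : (μ {ω | Z ω = fun _ => false}).toReal ≠ 0 :=
    ENNReal.toReal_ne_zero.2 ⟨h0.ne', measure_ne_top μ _⟩
  rw [e1, e0, e1d, e0d, ← mul_assoc, ← mul_assoc, ← mul_assoc, ← mul_assoc,
    inv_mul_cancel₀ hμ1, inv_mul_cancel₀ hμ0, one_mul, one_mul, one_mul, one_mul]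
  -- pointwise indicator identity
  have hdd : ∀ ω, d1 (G ω) - d0 (G ω) = if ω ∈ C then (1:ℝ) else 0 := by
    intro ω
    rw [hd1, hd0]
    simpa [hC, Set.mem_setOf_eq] using ind_diff (Dg (G ω)) (hVM (G ω))
  have hnum : ∫ ω, f1 (W ω) ∂μ - ∫ ω, f0 (W ω) ∂μ = ∫ ω in C, (Y1 ω - Y0 ω) ∂μ := by
    rw [← integral_sub hif1 hif0, ← integral_indicator hCm]
    congr 1
    funext ω
    have h : f1 (W ω) - f0 (W ω) = (d1 (G ω) - d0 (G ω)) * (Y1 ω - Y0 ω) := by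
      rw [hf1, hf0, hW]; dsimp only; ring
    rw [h, hdd ω, Set.indicator_apply]
    by_cases hω : ω ∈ C <;> simp [hω]
  have hdeno : ∫ ω, g1 (W ω) ∂μ - ∫ ω, g0 (W ω) ∂μ = (μ C).toReal := by
    rw [← integral_sub hig1 hig0]
    have h : (fun ω => g1 (W ω) - g0 (W ω)) = C.indicator (fun _ => (1:ℝ)) := by
      funext ω
      rw [hg1, hg0, hW]; dsimp only
      rw [hdd ω, Set.indicator_apply]
    rw [h, integral_indicator hCm]
    simp [measureReal_def]
  rw [hnum, hdeno, inv_mul_eq_div]
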